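/- If P is a complex polynomial of degree at most n, then the maximum of |P'(z)| over the unit circle |z|=1 is at most n times the maximum of |P(z)| over the unit circle. -/

import Mathlib

open Polynomial Metric Set

noncomputable def maxSphere (P : Polynomial ℂ) : ℝ :=
  sSup ((fun w => ‖P.eval w‖) '' sphere (0:ℂ) 1)

noncomputable def minSphere (P : Polynomial ℂ) : ℝ :=
  sInf ((fun w => ‖P.eval w‖) '' sphere (0:ℂ) 1)

lemma le_maxSphere (P : Polynomial ℂ) (w : ℂ) (hw : ‖w‖ = 1) :
    ‖P.eval w‖ ≤ maxSphere P := by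
  apply le_csSup
  · exact ((isCompact_sphere (0:ℂ) 1).image (by continuity)).bddAbove
  · exact ⟨w, by simpa [mem_sphere_iff_norm] using hw, rfl⟩

lemma maxSphere_nonneg (P : Polynomial ℂ) : 0 ≤ maxSphere P :=
  le_trans (norm_nonneg _) (le_maxSphere P 1 (by simp))

noncomputable def mirrorP (n : ℕ) (P : Polynomial ℂ) : Polynomial ℂ :=
  ∑ k ∈ Finset.range (n+1), C (P.coeff (n-k)) * X^k

lemma eval_mirrorP (n : ℕ) (P : Polynomial ℂ) (hP : P.natDegree ≤ n) (w : ℂ) (hw : w ≠ 0) :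
    (mirrorP n P).eval w = w^n * P.eval w⁻¹ := by
  rw [show mirrorP n P = ∑ k ∈ Finset.range (n+1), C (P.coeff (n-k)) * X^k from rfl, eval_finset_sum, eval_eq_sum_range' (lt_of_le_of_lt hP (Nat.lt_succ_self n)),
    Finset.mul_sum]
  rw [← Finset.sum_range_reflect]
  apply Finset.sum_congr rfl
  intro k hk
  simp only [Finset.mem_range] at hk
  have hk' : k ≤ n := Nat.lt_succ_iff.mp hk
  simp only [Nat.add_sub_cancel, Nat.sub_sub_self hk', eval_mul, eval_C, eval_pow, eval_X]
  have : w ^ n = w ^ (n - k) * w ^ k := by rw [← pow_add, Nat.sub_add_cancel hk']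
  rw [this]
  field_simp
  rw [one_div, inv_pow, mul_assoc, mul_inv_cancel₀ (pow_ne_zero _ hw), mul_one]

-- max modulus for polynomials on the unit disk
lemma poly_max_mod (Q : Polynomial ℂ) (C : ℝ)
    (h : ∀ w : ℂ, ‖w‖ = 1 → ‖Q.eval w‖ ≤ C)
    (w : ℂ) (hw : ‖w‖ ≤ 1) : ‖Q.eval w‖ ≤ C := by
  have := Complex.norm_le_of_forall_mem_frontier_norm_le (U := Metric.ball (0:ℂ) 1)
    isBounded_ball (f := fun z => Q.eval z) (C := C) ?_ ?_ (z := w) ?_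
  · simpa using this
  · exact (Q.differentiable).diffContOnCl
  · intro z hz
    rw [frontier_ball _ (one_ne_zero)] at hz
    simp only [mem_sphere_iff_norm, sub_zero] at hz
    exact h z hz
  · rw [closure_ball _ one_ne_zero]
    simpa using hw

-- exterior growth bound
lemma exterior_bound (n : ℕ) (P : Polynomial ℂ) (hP : P.natDegree ≤ n)
    (z : ℂ) (hz : 1 ≤ ‖z‖) :
    ‖P.eval z‖ ≤ maxSphere P * ‖z‖ ^ n := by
  have hz0 : z ≠ 0 := by intro h; rw [h] at hz; simp at hz; linarith
  have hmir : ∀ w : ℂ, ‖w‖ = 1 → ‖(mirrorP n P).eval w‖ ≤ maxSphere P := by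
    intro w hw
    have hw0 : w ≠ 0 := by intro h; rw [h] at hw; simp at hw
    rw [eval_mirrorP n P hP w hw0, norm_mul, norm_pow, hw, one_pow, one_mul]
    exact le_maxSphere P w⁻¹ (by rw [norm_inv, hw]; norm_num)
  have hinv : ‖z⁻¹‖ ≤ 1 := by
    rw [norm_inv]; exact inv_le_one_of_one_le₀ hz
  have h1 := poly_max_mod (mirrorP n P) (maxSphere P) hmir z⁻¹ hinv
  rw [eval_mirrorP n P hP z⁻¹ (inv_ne_zero hz0), inv_inv, norm_mul, norm_pow, norm_inv] at h1
  have habs : (‖z‖)⁻¹ ^ n * ‖P.eval z‖ ≤ maxSphere P := h1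
  have hpow : (0:ℝ) < ‖z‖ ^ n := by positivity
  calc ‖P.eval z‖
      = ((‖z‖)⁻¹ ^ n * ‖P.eval z‖) * ‖z‖ ^ n := by
        rw [inv_pow, mul_comm _ ‖P.eval z‖, mul_assoc, inv_mul_cancel₀ hpow.ne', mul_one]
    _ ≤ maxSphere P * ‖z‖ ^ n := by
        exact mul_le_mul_of_nonneg_right habs (le_of_lt hpow)

lemma logderiv_prod (s : Multiset ℂ) (w : ℂ) (hw : ∀ r ∈ s, w ≠ r) :
    (derivative (s.map (fun r => X - C r)).prod).eval w
      = (s.map (fun r => X - C r)).prod.eval w * (s.map (fun r => (w - r)⁻¹)).sum := by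
  induction s using Multiset.induction with
  | empty => simp
  | cons a t ih =>
    have ha : w - a ≠ 0 := sub_ne_zero.mpr (hw a (Multiset.mem_cons_self a t))
    have ht : ∀ r ∈ t, w ≠ r := fun r hr => hw r (Multiset.mem_cons_of_mem hr)
    simp only [Multiset.map_cons, Multiset.prod_cons, derivative_mul, derivative_sub,
      derivative_X, derivative_C, sub_zero, one_mul, eval_add, eval_mul, eval_sub, eval_X,
      eval_C, Multiset.sum_cons, ih ht]
    field_simp

lemma inv_mul_re_pos (w r : ℂ) (hw : 1 ≤ ‖w‖) (hr : ‖r‖ < 1) :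
    0 < ((w - r)⁻¹ * w).re := by
  have hwr : w - r ≠ 0 := by
    intro h
    rw [sub_eq_zero.mp h] at hw; linarith
  have hns : (0:ℝ) < Complex.normSq (w - r) := Complex.normSq_pos.mpr hwr
  rw [Complex.inv_def, mul_comm (starRingEnd ℂ (w - r)), mul_assoc, mul_comm _ w,
    Complex.re_ofReal_mul]
  apply mul_pos (inv_pos.mpr hns)
  have hexp : w * starRingEnd ℂ (w - r)
      = (Complex.normSq w : ℂ) - w * starRingEnd ℂ r := by
    rw [map_sub, mul_sub, Complex.mul_conj]
  rw [hexp, Complex.sub_re, Complex.ofReal_re]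
  have h1 : (w * starRingEnd ℂ r).re ≤ ‖w‖ * ‖r‖ := by
    calc (w * starRingEnd ℂ r).re ≤ ‖w * starRingEnd ℂ r‖ := Complex.re_le_norm _
      _ = ‖w‖ * ‖r‖ := by rw [norm_mul, Complex.norm_conj]
  have h2 : ‖w‖ * ‖r‖ < ‖w‖ * 1 :=
    mul_lt_mul_of_pos_left hr (by linarith)
  nlinarith [Complex.normSq_eq_norm_sq w, sq_nonneg (‖w‖)]

lemma multiset_sum_pos (s : Multiset ℝ) (h : ∀ x ∈ s, 0 < x) (hne : s ≠ 0) : 0 < s.sum := by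
  obtain ⟨a, ha⟩ := Multiset.exists_mem_of_ne_zero hne
  rw [← Multiset.cons_erase ha, Multiset.sum_cons]
  have h2 : 0 ≤ (s.erase a).sum :=
    Multiset.sum_nonneg (fun x hx => le_of_lt (h x (Multiset.mem_of_mem_erase hx)))
  linarith [h a ha]

lemma gauss_lucas (Q : Polynomial ℂ) (hQ' : derivative Q ≠ 0)
    (hroots : ∀ r ∈ Q.roots, ‖r‖ < 1)
    (w : ℂ) (hw : 1 ≤ ‖w‖) : (derivative Q).eval w ≠ 0 := by
  have hQ : Q ≠ 0 := by intro h; rw [h] at hQ'; simp at hQ'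
  have hsplit := Polynomial.Splits.eq_prod_roots (IsAlgClosed.splits Q)
  have hwr : ∀ r ∈ Q.roots, w ≠ r := by
    intro r hr he
    exact absurd (he ▸ hw) (not_le.mpr (hroots r hr))
  -- Q.roots nonempty, else derivative Q = 0
  have hne : Q.roots ≠ 0 := by
    intro h
    rw [h] at hsplit
    simp at hsplit
    rw [hsplit] at hQ'
    simp at hQ'
  have hlead : Q.leadingCoeff ≠ 0 := leadingCoeff_ne_zero.mpr hQ
  have hevalprod : ((Q.roots.map (fun r => X - C r)).prod).eval w ≠ 0 := by
    rw [eval_multiset_prod]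
    apply Multiset.prod_ne_zero
    intro h0
    simp only [Multiset.mem_map] at h0
    obtain ⟨g, hg, hg2⟩ := h0
    obtain ⟨r, hr, rfl⟩ := hg
    simp only [eval_sub, eval_X, eval_C] at hg2
    exact hwr r hr (sub_eq_zero.mp hg2)
  -- sum of reciprocals nonzero
  have hterm : ∀ r ∈ Q.roots, 0 < ((w - r)⁻¹ * w).re := fun r hr =>
    inv_mul_re_pos w r hw (hroots r hr)
  have hsum : (Q.roots.map (fun r => (w - r)⁻¹)).sum ≠ 0 := by
    intro h0
    have hre : ((Q.roots.map (fun r => (w - r)⁻¹ * w)).sum).re = 0 := by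
      rw [Multiset.sum_map_mul_right, h0, zero_mul, Complex.zero_re]
    have hms := AddMonoidHom.map_multiset_sum Complex.reAddGroupHom
      (Q.roots.map (fun r => (w - r)⁻¹ * w))
    rw [Multiset.map_map] at hms
    have hms' : ((Q.roots.map (fun r => (w - r)⁻¹ * w)).sum).re
        = (Q.roots.map (⇑Complex.reAddGroupHom ∘ fun r => (w - r)⁻¹ * w)).sum := hms
    have hpos : 0 < (Q.roots.map (⇑Complex.reAddGroupHom ∘ fun r => (w - r)⁻¹ * w)).sum := by
      apply multiset_sum_pos
      · intro x hx
        rw [Multiset.mem_map] at hx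
        obtain ⟨r, hr, rfl⟩ := hx
        exact hterm r hr
      · simpa [Multiset.map_eq_zero] using hne
    rw [hms'] at hre
    exact absurd hre (ne_of_gt hpos)
  rw [hsplit, derivative_mul, derivative_C, zero_mul, zero_add, eval_mul, eval_C,
    logderiv_prod Q.roots w hwr]
  exact mul_ne_zero hlead (mul_ne_zero hevalprod hsum)

lemma exists_unit_root (n : ℕ) (hn : 0 < n) (u : ℂ) (hu : ‖u‖ = 1) :
    ∃ ζ : ℂ, ‖ζ‖ = 1 ∧ ζ ^ n = u := by
  have hdeg : 0 < (X ^ n - C u).degree := by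
    rw [degree_X_pow_sub_C hn]; exact_mod_cast hn
  obtain ⟨ζ, hζ⟩ := Complex.exists_root hdeg
  have heq : ζ ^ n = u := by
    have h2 := hζ
    simp only [IsRoot, eval_sub, eval_pow, eval_X, eval_C, sub_eq_zero] at h2
    exact h2
  refine ⟨ζ, ?_, heq⟩
  have habs : ‖ζ‖ ^ n = 1 := by rw [← norm_pow, heq, hu]
  rcases lt_trichotomy (‖ζ‖) 1 with h | h | h
  · have := pow_lt_one₀ (norm_nonneg ζ) h hn.ne'
    linarith
  · exact h
  · have := one_lt_pow₀ h hn.ne'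
    linarith

lemma exists_align (α β : ℂ) :
    ∃ u : ℂ, ‖u‖ = 1 ∧ ‖α * u + β‖ = ‖α‖ + ‖β‖ := by
  by_cases hα : α = 0
  · exact ⟨1, by simp, by simp [hα]⟩
  by_cases hβ : β = 0
  · exact ⟨1, by simp, by simp [hβ]⟩
  have hαa : (0:ℝ) < ‖α‖ := norm_pos_iff.mpr hα
  have hβa : (0:ℝ) < ‖β‖ := norm_pos_iff.mpr hβ
  refine ⟨(‖α‖ : ℂ) * β / (α * (‖β‖ : ℂ)), ?_, ?_⟩
  · rw [norm_div, norm_mul, norm_mul, Complex.norm_real, Real.norm_eq_abs, Complex.norm_real, Real.norm_eq_abs,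
      abs_of_pos hαa, abs_of_pos hβa]
    field_simp
  · have hkey : α * ((‖α‖ : ℂ) * β / (α * (‖β‖ : ℂ))) + β
        = (((‖α‖ + ‖β‖) / ‖β‖ : ℝ) : ℂ) * β := by
      have hβ' : (‖β‖ : ℂ) ≠ 0 := by exact_mod_cast hβa.ne'
      push_cast
      field_simp
    rw [hkey, norm_mul, Complex.norm_real, Real.norm_eq_abs,
      abs_of_pos (by positivity : (0:ℝ) < (‖α‖ + ‖β‖) / ‖β‖)]
    field_simp

theorem stmt_0 (n : ℕ) (P : Polynomial ℂ) (hP : P.natDegree ≤ n) :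
    ∀ z : ℂ, ‖z‖ = 1 →
      ‖(derivative P).eval z‖ ≤ n * maxSphere P := by
  intro z hz
  rcases Nat.eq_zero_or_pos n with hn | hn
  · subst hn
    rw [Polynomial.eq_C_of_natDegree_le_zero hP]
    simp
  have hM0 : 0 ≤ maxSphere P := maxSphere_nonneg P
  have key : ∀ ε : ℝ, 0 < ε →
      ‖(derivative P).eval z‖ ≤ n * (maxSphere P + ε) := by
    intro ε hε
    by_contra hcon
    push_neg at hcon
    set M' : ℝ := maxSphere P + ε with hM'def
    have hM' : 0 < M' := by positivity
    have hMM' : maxSphere P < M' := by simp [hM'def]; linarith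
    have hz0 : z ≠ 0 := by intro h; rw [h] at hz; simp at hz
    have hzn : z ^ (n-1) ≠ 0 := pow_ne_zero _ hz0
    have hden : ((n:ℂ) * (M':ℂ) * z^(n-1)) ≠ 0 := by
      refine mul_ne_zero (mul_ne_zero ?_ ?_) hzn
      · exact_mod_cast hn.ne'
      · exact_mod_cast hM'.ne'
    set c : ℂ := (derivative P).eval z / ((n:ℂ) * (M':ℂ) * z^(n-1)) with hcdef
    have habs_den : ‖(n:ℂ) * (M':ℂ) * z^(n-1)‖ = n * M' := by
      rw [norm_mul, norm_mul, norm_pow, hz, one_pow, mul_one, Complex.norm_natCast,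
        Complex.norm_real, Real.norm_eq_abs, abs_of_pos hM']
    have hc1 : 1 < ‖c‖ := by
      rw [hcdef, norm_div, habs_den, lt_div_iff₀ (by positivity)]
      linarith
    have hc0 : c ≠ 0 := by
      intro h; rw [h] at hc1; simp at hc1; linarith
    set Q : Polynomial ℂ := C (c * (M':ℂ)) * X^n - P with hQdef
    have hQd : derivative Q = C (c * (M':ℂ) * n) * X^(n-1) - derivative P := by
      rw [hQdef, derivative_sub, derivative_C_mul_X_pow]
    have hQdz : (derivative Q).eval z = 0 := by
      rw [hQd]
      simp only [eval_sub, eval_mul, eval_C, eval_pow, eval_X]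
      rw [hcdef]
      field_simp
      have hn0 : (n:ℂ) ≠ 0 := by exact_mod_cast hn.ne'
      have hM0' : (M':ℂ) ≠ 0 := by exact_mod_cast hM'.ne'
      rw [div_self (mul_ne_zero hn0 hM0'), sub_self, mul_zero]
    have hQd0 : derivative Q ≠ 0 := by
      intro h
      have hQC := Polynomial.eq_C_of_derivative_eq_zero h
      set k : ℂ := Q.coeff 0 with hkdef
      have h2 : C (c * (M':ℂ)) * X^n - P = C k := hQdef.symm.trans hQC
      have hPeq : P = C (c * (M':ℂ)) * X^n - C k := by
        rw [← sub_sub_cancel (C (c * (M':ℂ)) * X^n) P, h2]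
      obtain ⟨u, hu1, hu2⟩ := exists_align (c * (M':ℂ)) (-k)
      obtain ⟨ζ, hζ1, hζ2⟩ := exists_unit_root n hn u hu1
      have hle := le_maxSphere P ζ hζ1
      have hval : P.eval ζ = c * (M':ℂ) * u + (-k) := by
        rw [hPeq]
        simp only [eval_sub, eval_mul, eval_C, eval_pow, eval_X, hζ2]
        ring
      rw [hval, hu2] at hle
      have habscM : ‖c * (M':ℂ)‖ = ‖c‖ * M' := by
        rw [norm_mul, Complex.norm_real, Real.norm_eq_abs, abs_of_pos hM']
      rw [habscM] at hle
      have h5 : ‖c‖ * M' ≤ maxSphere P :=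
        le_trans (le_add_of_nonneg_right (norm_nonneg _)) hle
      have h6 : 1 * M' < ‖c‖ * M' := mul_lt_mul_of_pos_right hc1 hM'
      linarith
    have hroots : ∀ r ∈ Q.roots, ‖r‖ < 1 := by
      intro r hr
      by_contra h1
      push_neg at h1
      have hroot := Polynomial.isRoot_of_mem_roots hr
      rw [hQdef] at hroot
      simp only [IsRoot, eval_sub, eval_mul, eval_C, eval_pow, eval_X, sub_eq_zero] at hroot
      have hext := exterior_bound n P hP r h1
      have habs : ‖c‖ * M' * ‖r‖ ^ n = ‖P.eval r‖ := by
        rw [← hroot, norm_mul, norm_mul, norm_pow, Complex.norm_real, Real.norm_eq_abs, abs_of_pos hM']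
      have hrn : (1:ℝ) ≤ ‖r‖ ^ n := one_le_pow₀ h1
      have h5 : ‖c‖ * M' ≤ maxSphere P := by
        have h7 : ‖c‖ * M' * ‖r‖ ^ n ≤ maxSphere P * ‖r‖ ^ n :=
          habs ▸ hext
        exact le_of_mul_le_mul_right h7 (lt_of_lt_of_le zero_lt_one hrn)
      have h6 : 1 * M' < ‖c‖ * M' := mul_lt_mul_of_pos_right hc1 hM'
      linarith
    exact gauss_lucas Q hQd0 hroots z (le_of_eq hz.symm) hQdz
  apply le_of_forall_pos_le_add
  intro δ hδ
  have hn' : (0:ℝ) < n := by exact_mod_cast hn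
  have hk := key (δ / n) (by positivity)
  have : (n:ℝ) * (maxSphere P + δ / n) = n * maxSphere P + δ := by
    field_simp
  linarith [this ▸ hk]
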